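/- For a real number x with 0 ≤ x < 1 and a nonnegative integer k, the sum Σ_{n=k}^∞ n!·xⁿ/((n−k)!)² equals e^x · x^k · Σ_{i=0}^{k} (k!/i!)·C(k,i)·x^i, where C(k,i) is the binomial coefficient. -/

import Mathlib

lemma key_shift (x : ℝ) (j n : ℕ) :
    ((n + j).choose j : ℝ) * x ^ (n + j) / (n + j).factorial
      = (x ^ j / j.factorial) * (x ^ n / n.factorial) := by
  have h : ((n + j).choose j : ℝ) * n.factorial * j.factorial = (n + j).factorial := by
    exact_mod_cast Nat.add_choose_mul_factorial_mul_factorial n j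
  have hn : (n.factorial : ℝ) ≠ 0 := Nat.cast_ne_zero.2 n.factorial_ne_zero
  have hj : (j.factorial : ℝ) ≠ 0 := Nat.cast_ne_zero.2 j.factorial_ne_zero
  have hnj : ((n + j).factorial : ℝ) ≠ 0 := Nat.cast_ne_zero.2 (n + j).factorial_ne_zero
  rw [pow_add]
  field_simp
  linear_combination (x ^ n * x ^ j) * h

lemma summable_g (x : ℝ) (j : ℕ) :
    Summable (fun n : ℕ => (n.choose j : ℝ) * x ^ n / n.factorial) := by
  rw [← summable_nat_add_iff j]
  simp only [key_shift]
  exact (Real.summable_pow_div_factorial x).mul_left _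

lemma tsum_g (x : ℝ) (j : ℕ) :
    ∑' n : ℕ, (n.choose j : ℝ) * x ^ n / n.factorial = Real.exp x * x ^ j / j.factorial := by
  rw [← Summable.sum_add_tsum_nat_add j (summable_g x j)]
  have h0 : ∑ i ∈ Finset.range j, (i.choose j : ℝ) * x ^ i / i.factorial = 0 := by
    apply Finset.sum_eq_zero
    intro i hi
    rw [Nat.choose_eq_zero_of_lt (Finset.mem_range.1 hi)]
    simp
  rw [h0, zero_add]
  simp only [key_shift]
  rw [tsum_mul_left, Real.exp_eq_exp_ℝ, NormedSpace.exp_eq_tsum_div]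
  ring

theorem stmt_1 (x : ℝ) (hx0 : 0 ≤ x) (hx1 : x < 1) (k : ℕ) :
    ∑' n : ℕ, ((n + k).factorial : ℝ) * x ^ (n + k) / ((n.factorial : ℝ)) ^ 2 =
    Real.exp x * x ^ k * ∑ i ∈ Finset.range (k + 1),
      ((k.factorial : ℝ) / (i.factorial : ℝ)) * (Nat.choose k i : ℝ) * x ^ i := by
  have term_eq : ∀ n : ℕ, ((n + k).factorial : ℝ) * x ^ (n + k) / ((n.factorial : ℝ)) ^ 2
      = ∑ i ∈ Finset.range (k + 1),
        ((k.factorial : ℝ) * (k.choose (k - i)) * x ^ k) * ((n.choose i : ℝ) * x ^ n / n.factorial) := by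
    intro n
    have hfac : (((n + k).choose k : ℝ)) * n.factorial * k.factorial = (n + k).factorial := by
      exact_mod_cast Nat.add_choose_mul_factorial_mul_factorial n k
    have hvdm : (((n + k).choose k : ℝ)) = ∑ i ∈ Finset.range (k + 1),
        (n.choose i : ℝ) * (k.choose (k - i)) := by
      rw_mod_cast [Nat.add_choose_eq]
      rw [Finset.Nat.sum_antidiagonal_eq_sum_range_succ_mk]
    have hn : (n.factorial : ℝ) ≠ 0 := Nat.cast_ne_zero.2 n.factorial_ne_zero
    rw [← hfac, hvdm, Finset.sum_mul, Finset.sum_mul, Finset.sum_mul, Finset.sum_div]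
    apply Finset.sum_congr rfl
    intro i _
    field_simp
    ring
  calc ∑' n : ℕ, ((n + k).factorial : ℝ) * x ^ (n + k) / ((n.factorial : ℝ)) ^ 2
      = ∑' n : ℕ, ∑ i ∈ Finset.range (k + 1),
        ((k.factorial : ℝ) * (k.choose (k - i)) * x ^ k) * ((n.choose i : ℝ) * x ^ n / n.factorial) := by
        exact tsum_congr term_eq
    _ = ∑ i ∈ Finset.range (k + 1), ∑' n : ℕ,
        ((k.factorial : ℝ) * (k.choose (k - i)) * x ^ k) * ((n.choose i : ℝ) * x ^ n / n.factorial) := by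
        exact Summable.tsum_finsetSum (fun i _ => (summable_g x i).mul_left _)
    _ = Real.exp x * x ^ k * ∑ i ∈ Finset.range (k + 1),
        ((k.factorial : ℝ) / (i.factorial : ℝ)) * (Nat.choose k i : ℝ) * x ^ i := by
        rw [Finset.mul_sum]
        apply Finset.sum_congr rfl
        intro i hi
        rw [tsum_mul_left, tsum_g]
        rw [Nat.choose_symm (Nat.lt_succ_iff.1 (Finset.mem_range.1 hi))]
        field_simp
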